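/- For the explicit matrix Q (with entries q_{i,j} = w_j for j ≤ i, q_{i,i+1} = -∑_{j=1}^i w_j, zeros elsewhere) and any nondecreasing positive vector x (0 < x_1 ≤ x_2 ≤ ... ≤ x_N), all off-diagonal entries of the matrix T = Q·diag(x)·Q^{-1} are nonpositive. -/

import Mathlib

open Finset Matrix

private lemma rowQ {n : ℕ} (w : ℕ → ℝ)
    (Q : Matrix (Fin (n + 1)) (Fin (n + 1)) ℝ)
    (hQ : ∀ i j : Fin (n + 1),
      Q i j = if (j : ℕ) ≤ (i : ℕ) then w j
        else if (j : ℕ) = (i : ℕ) + 1 then -(∑ k ∈ Finset.range ((i : ℕ) + 1), w k)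
        else 0)
    (i : Fin (n + 1)) (f : ℕ → ℝ) :
    ∑ k : Fin (n + 1), Q i k * f (k : ℕ)
      = ∑ k ∈ Finset.range ((i : ℕ) + 1), w k * f k
        + (if (i : ℕ) + 1 ≤ n then
            -(∑ k ∈ Finset.range ((i : ℕ) + 1), w k) * f ((i : ℕ) + 1) else 0) := by
  have hsplit : ∀ k : Fin (n + 1), Q i k * f (k : ℕ) =
      (if (k : ℕ) ≤ (i : ℕ) then w k * f k else 0)
      + (if (k : ℕ) = (i : ℕ) + 1 then
          -(∑ l ∈ Finset.range ((i : ℕ) + 1), w l) * f (k : ℕ) else 0) := by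
    intro k
    rw [hQ]
    rcases le_or_gt (k : ℕ) (i : ℕ) with h | h
    · have h2 : ¬ (k : ℕ) = (i : ℕ) + 1 := by omega
      simp [h, h2]
    · rcases eq_or_ne ((k : ℕ)) ((i : ℕ) + 1) with he | he
      · simp [h.not_ge, he]
      · simp [h.not_ge, he]
  rw [Finset.sum_congr rfl (fun k _ => hsplit k), Finset.sum_add_distrib]
  congr 1
  · have h1 : ∑ k : Fin (n + 1), (if (k : ℕ) ≤ (i : ℕ) then w k * f k else 0)
        = ∑ k ∈ Finset.range (n + 1), (if k ≤ (i : ℕ) then w k * f k else 0) :=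
      Fin.sum_univ_eq_sum_range (fun k => if k ≤ (i : ℕ) then w k * f k else 0) (n + 1)
    rw [h1]
    rw [← Finset.sum_subset (Finset.range_subset_range.2 (by omega : (i : ℕ) + 1 ≤ n + 1))
        (fun k hk hk2 => by
          rw [if_neg]
          simp only [Finset.mem_range] at hk hk2
          omega)]
    exact Finset.sum_congr rfl fun k hk =>
      if_pos (Nat.lt_succ_iff.mp (Finset.mem_range.mp hk))
  · rcases Nat.lt_or_ge ((i : ℕ) + 1) (n + 1) with h | h
    · have hle : (i : ℕ) + 1 ≤ n := by omega
      rw [if_pos hle]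
      rw [Finset.sum_eq_single_of_mem (⟨(i : ℕ) + 1, h⟩ : Fin (n + 1)) (Finset.mem_univ _)
        (fun b _ hb => if_neg (fun hc => hb (Fin.ext hc)))]
      simp
    · rw [if_neg (by omega)]
      apply Finset.sum_eq_zero
      intro k _
      rw [if_neg]
      have := k.isLt
      omega

private lemma diag_one (S1 S2 ww : ℝ) (h1 : S1 ≠ 0) (h2 : S2 ≠ 0) (h3 : S2 = S1 + ww) :
    S1 * (ww / (S1 * S2)) + -S1 * -S2⁻¹ = 1 := by
  subst h3
  field_simp
  ring

private lemma offdiag_zero (S1 S2 ww : ℝ) (h1 : S1 ≠ 0) (h2 : S2 ≠ 0) :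
    S1 * (ww / (S1 * S2)) + ww * -S2⁻¹ = 0 := by
  field_simp
  ring

/-- For the explicit matrix `Q` and nondecreasing positive nodes `x`, all
off-diagonal entries of `T = Q diag(x) Q⁻¹` are nonpositive. -/
theorem stmt_4 (n : ℕ) (w : ℕ → ℝ) (hw : ∀ i ≤ n, 0 < w i)
    (x : Fin (n + 1) → ℝ) (hx0 : ∀ i, 0 < x i) (hxmono : Monotone x)
    (Q : Matrix (Fin (n + 1)) (Fin (n + 1)) ℝ)
    (hQ : ∀ i j : Fin (n + 1),
      Q i j = if (j : ℕ) ≤ (i : ℕ) then w j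
        else if (j : ℕ) = (i : ℕ) + 1 then -(∑ k ∈ Finset.range ((i : ℕ) + 1), w k)
        else 0) :
    ∀ i j : Fin (n + 1), i ≠ j → (Q * Matrix.diagonal x * Q⁻¹) i j ≤ 0 := by
  have hSpos : ∀ m, m ≤ n → 0 < ∑ l ∈ Finset.range (m + 1), w l := by
    intro m hm
    apply Finset.sum_pos
    · intro l hl
      exact hw l (by simp only [Finset.mem_range] at hl; omega)
    · exact ⟨0, Finset.mem_range.mpr (by omega)⟩
  set x' : ℕ → ℝ := fun m => if h : m < n + 1 then x ⟨m, h⟩ else 0 with hx'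
  have hx'eq : ∀ k : Fin (n + 1), x k = x' (k : ℕ) := by
    intro k; simp [hx', k.isLt]
    intro h; have := k.isLt; omega
  have hkey : ∀ m, m + 1 ≤ n → ∑ k ∈ Finset.range (m + 1), w k * x' k
      ≤ (∑ k ∈ Finset.range (m + 1), w k) * x' (m + 1) := by
    intro m hm
    rw [Finset.sum_mul]
    apply Finset.sum_le_sum
    intro k hk
    have hk' : k ≤ m := Nat.lt_succ_iff.mp (Finset.mem_range.mp hk)
    apply mul_le_mul_of_nonneg_left _ (hw k (by omega)).le
    simp only [hx']
    rw [dif_pos (by omega : k < n + 1), dif_pos (by omega : m + 1 < n + 1)]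
    exact hxmono (by simp only [Fin.mk_le_mk]; omega)
  set R : Matrix (Fin (n + 1)) (Fin (n + 1)) ℝ := Matrix.of fun k j =>
    if (j : ℕ) = n then (∑ l ∈ Finset.range (n + 1), w l)⁻¹
    else if (k : ℕ) ≤ (j : ℕ) then
      w ((j : ℕ) + 1) /
        ((∑ l ∈ Finset.range ((j : ℕ) + 1), w l) * (∑ l ∈ Finset.range ((j : ℕ) + 2), w l))
    else if (k : ℕ) = (j : ℕ) + 1 then -(∑ l ∈ Finset.range ((j : ℕ) + 2), w l)⁻¹
    else 0 with hRdef
  have htail : ∀ (g : ℕ → ℝ) (b a : ℕ), (∀ k, b + 2 ≤ k → g k = 0) → b + 1 ≤ a →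
      ∑ k ∈ Finset.range (a + 1), g k = ∑ k ∈ Finset.range (b + 2), g k := by
    intro g b a hg ha
    rw [← Finset.sum_subset (Finset.range_subset_range.2 (by omega : b + 2 ≤ a + 1))]
    intro k hk hk2
    simp only [Finset.mem_range] at hk hk2
    exact hg k (by omega)
  have hQR : Q * R = 1 := by
    ext a b
    rw [Matrix.mul_apply, Matrix.one_apply]
    set r : ℕ → ℝ := fun m =>
      if (b : ℕ) = n then (∑ l ∈ Finset.range (n + 1), w l)⁻¹
      else if m ≤ (b : ℕ) then
        w ((b : ℕ) + 1) /
          ((∑ l ∈ Finset.range ((b : ℕ) + 1), w l) * (∑ l ∈ Finset.range ((b : ℕ) + 2), w l))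
      else if m = (b : ℕ) + 1 then -(∑ l ∈ Finset.range ((b : ℕ) + 2), w l)⁻¹
      else 0 with hr
    have hRb : ∀ k : Fin (n + 1), R k b = r (k : ℕ) := fun k => rfl
    rw [Finset.sum_congr rfl (fun k _ => by rw [hRb k]), rowQ w Q hQ a r]
    rcases eq_or_ne ((b : ℕ)) n with hbn | hbn
    · -- last column
      have hrconst : ∀ m, r m = (∑ l ∈ Finset.range (n + 1), w l)⁻¹ := by
        intro m; simp only [hr]; rw [if_pos hbn]
      have h1 : ∑ k ∈ Finset.range ((a : ℕ) + 1), w k * r k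
          = (∑ k ∈ Finset.range ((a : ℕ) + 1), w k) * (∑ l ∈ Finset.range (n + 1), w l)⁻¹ := by
        rw [Finset.sum_mul]
        exact Finset.sum_congr rfl fun k _ => by rw [hrconst]
      rw [h1, hrconst]
      rcases eq_or_ne ((a : ℕ)) n with han | han
      · have hab : a = b := Fin.ext (by omega)
        rw [if_pos hab, if_neg (by omega), han]
        simpa using mul_inv_cancel₀ (ne_of_gt (hSpos n le_rfl))
      · have hab : a ≠ b := fun h => han (by rw [h, hbn])
        rw [if_neg hab, if_pos (by have := a.isLt; omega)]
        ring
    · have hbn' : (b : ℕ) < n := by have := b.isLt; omega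
      have hne1 : (∑ l ∈ Finset.range ((b : ℕ) + 1), w l) ≠ 0 := ne_of_gt (hSpos _ (by omega))
      have hne2 : (∑ l ∈ Finset.range ((b : ℕ) + 2), w l) ≠ 0 := by
        have := hSpos ((b : ℕ) + 1) (by omega)
        intro h; rw [show (b : ℕ) + 2 = (b : ℕ) + 1 + 1 from rfl] at h; exact absurd h (ne_of_gt this)
      have hsum : (∑ l ∈ Finset.range ((b : ℕ) + 2), w l)
          = (∑ l ∈ Finset.range ((b : ℕ) + 1), w l) + w ((b : ℕ) + 1) :=
        Finset.sum_range_succ w ((b : ℕ) + 1)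
      have hrA : ∀ m, m ≤ (b : ℕ) → r m = w ((b : ℕ) + 1) /
          ((∑ l ∈ Finset.range ((b : ℕ) + 1), w l) * (∑ l ∈ Finset.range ((b : ℕ) + 2), w l)) := by
        intro m hm; simp only [hr]; rw [if_neg hbn, if_pos hm]
      have hrB : r ((b : ℕ) + 1) = -(∑ l ∈ Finset.range ((b : ℕ) + 2), w l)⁻¹ := by
        simp only [hr]; rw [if_neg hbn, if_neg (by omega)]; simp
      have hr0 : ∀ m, (b : ℕ) + 1 < m → r m = 0 := by
        intro m hm; simp only [hr]; rw [if_neg hbn, if_neg (by omega), if_neg (by omega)]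
      rcases lt_trichotomy ((a : ℕ)) ((b : ℕ)) with hab | hab | hab
      · have h1 : ∑ k ∈ Finset.range ((a : ℕ) + 1), w k * r k
            = (∑ k ∈ Finset.range ((a : ℕ) + 1), w k) *
              (w ((b : ℕ) + 1) /
                ((∑ l ∈ Finset.range ((b : ℕ) + 1), w l) * (∑ l ∈ Finset.range ((b : ℕ) + 2), w l))) := by
          rw [Finset.sum_mul]
          refine Finset.sum_congr rfl fun k hk => ?_
          rw [hrA k (by have := Finset.mem_range.mp hk; omega)]
        rw [h1, if_pos (by omega), hrA ((a : ℕ) + 1) (by omega),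
          if_neg (fun h => (by omega : (a : ℕ) ≠ (b : ℕ)) (by rw [h]))]
        ring
      · have hab' : a = b := Fin.ext hab
        rw [if_pos hab']
        have h1 : ∑ k ∈ Finset.range ((a : ℕ) + 1), w k * r k
            = (∑ k ∈ Finset.range ((b : ℕ) + 1), w k) *
              (w ((b : ℕ) + 1) /
                ((∑ l ∈ Finset.range ((b : ℕ) + 1), w l) * (∑ l ∈ Finset.range ((b : ℕ) + 2), w l))) := by
          rw [hab, Finset.sum_mul]
          refine Finset.sum_congr rfl fun k hk => ?_
          rw [hrA k (by have := Finset.mem_range.mp hk; omega)]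
        rw [h1, if_pos (by omega), hab, hrB]
        exact diag_one _ _ _ hne1 hne2 hsum
      · have hab' : a ≠ b := fun h => (by omega : (a : ℕ) ≠ (b : ℕ)) (by rw [h])
        rw [if_neg hab']
        have hg0 : ∀ k, (b : ℕ) + 2 ≤ k → w k * r k = 0 := by
          intro k hk; rw [hr0 k (by omega), mul_zero]
        have h1 : ∑ k ∈ Finset.range ((a : ℕ) + 1), w k * r k
            = ∑ k ∈ Finset.range ((b : ℕ) + 2), w k * r k :=
          htail _ _ _ hg0 (by omega)
        have h2 : ∑ k ∈ Finset.range ((b : ℕ) + 2), w k * r k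
            = (∑ k ∈ Finset.range ((b : ℕ) + 1), w k) *
              (w ((b : ℕ) + 1) /
                ((∑ l ∈ Finset.range ((b : ℕ) + 1), w l) * (∑ l ∈ Finset.range ((b : ℕ) + 2), w l)))
              + w ((b : ℕ) + 1) * (-(∑ l ∈ Finset.range ((b : ℕ) + 2), w l)⁻¹) := by
          rw [Finset.sum_range_succ]
          congr 1
          · rw [Finset.sum_mul]
            refine Finset.sum_congr rfl fun k hk => ?_
            rw [hrA k (by have := Finset.mem_range.mp hk; omega)]
          · rw [hrB]
        have h3 : r ((a : ℕ) + 1) = 0 := hr0 _ (by omega)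
        rw [h1, h2, h3]
        have h4 : (if (a : ℕ) + 1 ≤ n then
            -(∑ k ∈ Finset.range ((a : ℕ) + 1), w k) * (0 : ℝ) else 0) = 0 := by
          split <;> simp
        rw [h4, add_zero]
        exact offdiag_zero _ _ _ hne1 hne2
  have hQinv : Q⁻¹ = R := Matrix.inv_eq_right_inv hQR
  intro i j hij
  rw [hQinv, Matrix.mul_apply]
  set r : ℕ → ℝ := fun m =>
    if (j : ℕ) = n then (∑ l ∈ Finset.range (n + 1), w l)⁻¹
    else if m ≤ (j : ℕ) then
      w ((j : ℕ) + 1) /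
        ((∑ l ∈ Finset.range ((j : ℕ) + 1), w l) * (∑ l ∈ Finset.range ((j : ℕ) + 2), w l))
    else if m = (j : ℕ) + 1 then -(∑ l ∈ Finset.range ((j : ℕ) + 2), w l)⁻¹
    else 0 with hr
  have hterm : ∀ k : Fin (n + 1), (Q * Matrix.diagonal x) i k * R k j
      = Q i k * (x' (k : ℕ) * r (k : ℕ)) := by
    intro k
    rw [Matrix.mul_diagonal, hx'eq k, mul_assoc]
    rfl
  rw [Finset.sum_congr rfl (fun k _ => hterm k), rowQ w Q hQ i (fun m => x' m * r m)]
  rcases eq_or_ne ((j : ℕ)) n with hjn | hjn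
  · -- last column, necessarily i < n
    have hin : (i : ℕ) < n := by
      have := i.isLt
      rcases Nat.lt_or_ge (i : ℕ) n with h | h
      · exact h
      · exact absurd (Fin.ext (by omega : (i : ℕ) = (j : ℕ))) hij
    have hrconst : ∀ m, r m = (∑ l ∈ Finset.range (n + 1), w l)⁻¹ := by
      intro m; simp only [hr]; rw [if_pos hjn]
    have h1 : ∑ k ∈ Finset.range ((i : ℕ) + 1), w k * (x' k * r k)
        = (∑ k ∈ Finset.range ((i : ℕ) + 1), w k * x' k) * (∑ l ∈ Finset.range (n + 1), w l)⁻¹ := by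
      rw [Finset.sum_mul]
      exact Finset.sum_congr rfl fun k _ => by rw [hrconst]; ring
    rw [h1, if_pos (by omega), hrconst]
    have hc : (0 : ℝ) ≤ (∑ l ∈ Finset.range (n + 1), w l)⁻¹ := (inv_pos.mpr (hSpos n le_rfl)).le
    have hb := hkey (i : ℕ) (by omega)
    nlinarith [hb, hc]
  · have hjn' : (j : ℕ) < n := by have := j.isLt; omega
    have hne1 : (∑ l ∈ Finset.range ((j : ℕ) + 1), w l) ≠ 0 := ne_of_gt (hSpos _ (by omega))
    have hSj1 : 0 < ∑ l ∈ Finset.range ((j : ℕ) + 2), w l := by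
      have := hSpos ((j : ℕ) + 1) (by omega)
      rwa [show (j : ℕ) + 1 + 1 = (j : ℕ) + 2 from rfl] at this
    have hne2 : (∑ l ∈ Finset.range ((j : ℕ) + 2), w l) ≠ 0 := ne_of_gt hSj1
    have hwj1 := hw ((j : ℕ) + 1) (by omega)
    have hA : (0 : ℝ) ≤ w ((j : ℕ) + 1) /
        ((∑ l ∈ Finset.range ((j : ℕ) + 1), w l) * (∑ l ∈ Finset.range ((j : ℕ) + 2), w l)) := by
      have := hSpos (j : ℕ) (by omega)
      positivity
    have hrA : ∀ m, m ≤ (j : ℕ) → r m = w ((j : ℕ) + 1) /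
        ((∑ l ∈ Finset.range ((j : ℕ) + 1), w l) * (∑ l ∈ Finset.range ((j : ℕ) + 2), w l)) := by
      intro m hm; simp only [hr]; rw [if_neg hjn, if_pos hm]
    have hrB : r ((j : ℕ) + 1) = -(∑ l ∈ Finset.range ((j : ℕ) + 2), w l)⁻¹ := by
      simp only [hr]; rw [if_neg hjn, if_neg (by omega)]; simp
    have hr0 : ∀ m, (j : ℕ) + 1 < m → r m = 0 := by
      intro m hm; simp only [hr]; rw [if_neg hjn, if_neg (by omega), if_neg (by omega)]
    rcases lt_trichotomy ((i : ℕ)) ((j : ℕ)) with hij' | hij' | hij'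
    · have h1 : ∑ k ∈ Finset.range ((i : ℕ) + 1), w k * (x' k * r k)
          = (∑ k ∈ Finset.range ((i : ℕ) + 1), w k * x' k) *
            (w ((j : ℕ) + 1) /
              ((∑ l ∈ Finset.range ((j : ℕ) + 1), w l) * (∑ l ∈ Finset.range ((j : ℕ) + 2), w l))) := by
        rw [Finset.sum_mul]
        refine Finset.sum_congr rfl fun k hk => ?_
        rw [hrA k (by have := Finset.mem_range.mp hk; omega)]
        ring
      rw [h1, if_pos (by omega), hrA ((i : ℕ) + 1) (by omega)]
      have hb := hkey (i : ℕ) (by omega)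
      nlinarith [hb, hA]
    · exact absurd (Fin.ext hij') hij
    · -- i > j
      have hg0 : ∀ k, (j : ℕ) + 2 ≤ k → w k * (x' k * r k) = 0 := by
        intro k hk; rw [hr0 k (by omega)]; ring
      have h1 : ∑ k ∈ Finset.range ((i : ℕ) + 1), w k * (x' k * r k)
          = ∑ k ∈ Finset.range ((j : ℕ) + 2), w k * (x' k * r k) :=
        htail _ _ _ hg0 (by omega)
      have h2 : ∑ k ∈ Finset.range ((j : ℕ) + 2), w k * (x' k * r k)
          = (∑ k ∈ Finset.range ((j : ℕ) + 1), w k * x' k) *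
              (w ((j : ℕ) + 1) /
                ((∑ l ∈ Finset.range ((j : ℕ) + 1), w l) * (∑ l ∈ Finset.range ((j : ℕ) + 2), w l)))
            + w ((j : ℕ) + 1) * (x' ((j : ℕ) + 1) * (-(∑ l ∈ Finset.range ((j : ℕ) + 2), w l)⁻¹)) := by
        rw [Finset.sum_range_succ]
        congr 1
        · rw [Finset.sum_mul]
          refine Finset.sum_congr rfl fun k hk => ?_
          rw [hrA k (by have := Finset.mem_range.mp hk; omega)]
          ring
        · rw [hrB]
      have h3 : x' ((i : ℕ) + 1) * r ((i : ℕ) + 1) = 0 := by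
        rw [hr0 _ (by omega), mul_zero]
      have h4 : (if (i : ℕ) + 1 ≤ n then
          -(∑ k ∈ Finset.range ((i : ℕ) + 1), w k) * (x' ((i : ℕ) + 1) * r ((i : ℕ) + 1)) else 0)
          = 0 := by
        rw [h3]
        split <;> simp
      rw [h1, h2, h4, add_zero]
      have hb := hkey (j : ℕ) (by omega)
      have heq : w ((j : ℕ) + 1) * (x' ((j : ℕ) + 1) * (-(∑ l ∈ Finset.range ((j : ℕ) + 2), w l)⁻¹))
          = -(((∑ l ∈ Finset.range ((j : ℕ) + 1), w l) * x' ((j : ℕ) + 1)) *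
              (w ((j : ℕ) + 1) /
                ((∑ l ∈ Finset.range ((j : ℕ) + 1), w l) * (∑ l ∈ Finset.range ((j : ℕ) + 2), w l)))) := by
        field_simp
      rw [heq]
      nlinarith [hb, hA]
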